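/- Let U = ℤ, let L_∞ = ℤ and, for each i ∈ ℤ, let L_i = {n ∈ ℤ : n ≥ -i}, and let C = {L_∞} ∪ {L_i : i ∈ ℤ}. Then there is no probability space (Ω, μ) and Ω-indexed family of exhaustive generating algorithms (A_ω)_{ω ∈ Ω} (with the relevant events measurable) satisfying: for every K ∈ C and every enumeration of K, there exists t* < ∞ such that for every t ≥ t*, μ{ω : Z^ω_{≥t} \ K is finite} > 1/2 and μ{ω : S_t ∪ Z^ω_{<t} ∪ Z^ω_{≥t} ⊇ K} > 1/2. -/
import Mathlib


/-!
STATEMENT 4: For U = ℤ, L_∞ = ℤ, L_i = {n : ℤ | n ≥ -i} (i ∈ ℤ), and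
C = {L_∞} ∪ {L_i : i ∈ ℤ}, there is no probability space (Ω, μ) and Ω-indexed family
of exhaustive generating algorithms (A_ω) (with the relevant events measurable) such
that: for every K ∈ C and every enumeration of K there exists t* < ∞ such that for
every t ≥ t*, μ{ω : Z^ω_{≥t} \ K finite} > 1/2 and
μ{ω : S_t ∪ Z^ω_{<t} ∪ Z^ω_{≥t} ⊇ K} > 1/2.
-/

open MeasureTheory

/-- `x` is an enumeration of the language `K`. -/
def IsEnumerationOf {U : Type} (K : Set U) (x : ℕ → U) : Prop :=
  (∀ t, x t ∈ K) ∧ ∀ w ∈ K, ∃ t, x t = w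

/-- The set `S_t` of distinct strings among the first `t` inputs. -/
def seen {U : Type} (x : ℕ → U) (t : ℕ) : Set U := x '' {i | i < t}

/-- The input prefix `(x_1, ..., x_t)` as a list. -/
def inputList {U : Type} (x : ℕ → U) (t : ℕ) : List U :=
  List.ofFn (fun i : Fin t => x i)

/-- `Z_{<t}`: the distinct strings among `G_1(1), ..., G_{t-1}(1)`. -/
def ZltSet {U : Type} (A : List U → ℕ → U) (x : ℕ → U) (t : ℕ) : Set U :=
  (fun s => A (inputList x s) 0) '' {s | 1 ≤ s ∧ s < t}

/-- `Z_{≥t}`: the distinct strings in `G_t(1), G_t(2), ...`. -/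
def ZgeSet {U : Type} (A : List U → ℕ → U) (x : ℕ → U) (t : ℕ) : Set U :=
  Set.range (A (inputList x t))

/-- The collection C = {L_∞} ∪ {L_i : i ∈ ℤ} with L_∞ = ℤ, L_i = {n ≥ -i}. -/
def Ccoll : Set (Set ℤ) :=
  insert (Set.univ : Set ℤ) (Set.range fun i : ℤ => {n : ℤ | -i ≤ n})

namespace RegenAux

/-- The language `L i = {n : ℤ | -i ≤ n}`. -/
def L (i : ℤ) : Set ℤ := {n : ℤ | -i ≤ n}

lemma L_mem_Ccoll (i : ℤ) : L i ∈ Ccoll :=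
  Set.mem_insert_iff.mpr (Or.inr ⟨i, rfl⟩)

lemma univ_mem_Ccoll : (Set.univ : Set ℤ) ∈ Ccoll := Set.mem_insert _ _

variable {Ω : Type} [MeasurableSpace Ω]

/-- The probabilistic guarantee from the theorem statement. -/
def HG (μ : Measure Ω) (A : Ω → List ℤ → ℕ → ℤ) : Prop :=
  ∀ K ∈ Ccoll, ∀ x : ℕ → ℤ, IsEnumerationOf K x →
    ∃ tstar : ℕ, ∀ t : ℕ, tstar ≤ t →
      (1 : ENNReal) / 2 < μ {ω | (ZgeSet (A ω) x t \ K).Finite} ∧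
      (1 : ENNReal) / 2 <
        μ {ω | K ⊆ seen x t ∪ ZltSet (A ω) x t ∪ ZgeSet (A ω) x t}

variable {μ : Measure Ω} {A : Ω → List ℤ → ℕ → ℤ}

open Classical in
/-- A choice of the threshold `t*` for `K = L i` and enumeration `f`. -/
noncomputable def tch (h : HG μ A) (i : ℤ) (f : ℕ → ℤ) : ℕ :=
  if he : IsEnumerationOf (L i) f then (h (L i) (L_mem_Ccoll i) f he).choose else 0

lemma tch_spec (h : HG μ A) {i : ℤ} {f : ℕ → ℤ} (he : IsEnumerationOf (L i) f)
    {t : ℕ} (ht : tch h i f ≤ t) :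
    (1 : ENNReal) / 2 < μ {ω | (ZgeSet (A ω) f t \ L i).Finite} := by
  classical
  rw [tch, dif_pos he] at ht
  exact ((h (L i) (L_mem_Ccoll i) f he).choose_spec t ht).1

/-- A fixed surjection `ℕ → ℤ`. -/
noncomputable def zf : ℕ → ℤ := fun k => (Denumerable.eqv ℤ).symm k

lemma zf_surj : Function.Surjective zf := (Denumerable.eqv ℤ).symm.surjective

/-- An index `i'` large enough that the first `t` values of `f` and `z` lie in `L i'`. -/
noncomputable def nextI (t : ℕ) (f : ℕ → ℤ) (z : ℤ) : ℤ :=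
  ((((Finset.range t).sup fun s => (-(f s)).toNat) ⊔ (-z).toNat : ℕ) : ℤ)

lemma nextI_nonneg (t : ℕ) (f : ℕ → ℤ) (z : ℤ) : 0 ≤ nextI t f z :=
  Int.ofNat_nonneg _

lemma neg_f_le_nextI {t : ℕ} {s : ℕ} (hs : s < t) (f : ℕ → ℤ) (z : ℤ) :
    -(f s) ≤ nextI t f z := by
  have h1 : (-(f s)).toNat ≤
      (((Finset.range t).sup fun r => (-(f r)).toNat) ⊔ (-z).toNat) :=
    le_sup_of_le_left (Finset.le_sup (f := fun r => (-(f r)).toNat)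
      (Finset.mem_range.mpr hs))
  calc -(f s) ≤ (((-(f s)).toNat : ℕ) : ℤ) := Int.self_le_toNat _
    _ ≤ nextI t f z := by unfold nextI; exact_mod_cast h1

lemma neg_z_le_nextI (t : ℕ) (f : ℕ → ℤ) (z : ℤ) : -z ≤ nextI t f z := by
  have h1 : (-z).toNat ≤
      (((Finset.range t).sup fun r => (-(f r)).toNat) ⊔ (-z).toNat) :=
    le_sup_right
  calc -z ≤ (((-z).toNat : ℕ) : ℤ) := Int.self_le_toNat _
    _ ≤ nextI t f z := by unfold nextI; exact_mod_cast h1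

/-- The extension of the length-`t` prefix of `f`, followed by `z`, to an
enumeration of `L (nextI t f z)`. -/
noncomputable def nextF (t : ℕ) (f : ℕ → ℤ) (z : ℤ) : ℕ → ℤ :=
  fun s => if s < t then f s else if s = t then z
    else -(nextI t f z) + ((s - (t + 1) : ℕ) : ℤ)

lemma nextF_enum (t : ℕ) (f : ℕ → ℤ) (z : ℤ) :
    IsEnumerationOf (L (nextI t f z)) (nextF t f z) := by
  constructor
  · intro s
    unfold nextF L
    split_ifs with h1 h2
    · have := neg_f_le_nextI h1 f z
      simp only [Set.mem_setOf_eq]; linarith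
    · have := neg_z_le_nextI t f z
      simp only [Set.mem_setOf_eq]; linarith
    · have : (0 : ℤ) ≤ ((s - (t + 1) : ℕ) : ℤ) := Int.ofNat_nonneg _
      simp only [Set.mem_setOf_eq]; linarith
  · intro w hw
    have hw' : -(nextI t f z) ≤ w := hw
    refine ⟨(t + 1) + (w + nextI t f z).toNat, ?_⟩
    have h1 : ¬ ((t + 1) + (w + nextI t f z).toNat < t) := by omega
    have h2 : ¬ ((t + 1) + (w + nextI t f z).toNat = t) := by omega
    unfold nextF
    rw [if_neg h1, if_neg h2]
    have h3 : ((t + 1) + (w + nextI t f z).toNat - (t + 1) : ℕ) =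
        (w + nextI t f z).toNat := by omega
    rw [h3, Int.toNat_of_nonneg (by linarith)]
    ring

/-- One step of the construction: state is `(t, i, f)` where `f` enumerates `L i`
and the validity guarantee for `(L i, f)` is active at time `t`. -/
noncomputable def step (h : HG μ A) (k : ℕ) :
    ℕ × ℤ × (ℕ → ℤ) → ℕ × ℤ × (ℕ → ℤ) := fun p =>
  (max (p.1 + 1) (tch h (nextI p.1 p.2.2 (zf k)) (nextF p.1 p.2.2 (zf k))),
    nextI p.1 p.2.2 (zf k), nextF p.1 p.2.2 (zf k))

/-- The initial enumeration: `f0 n = n`, enumerating `L 0`. -/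
noncomputable def state (h : HG μ A) : ℕ → ℕ × ℤ × (ℕ → ℤ)
  | 0 => (tch h 0 (fun n => (n : ℤ)), 0, fun n => (n : ℤ))
  | (k + 1) => step h k (state h k)

lemma state_zero_enum : IsEnumerationOf (L 0) (fun n => (n : ℤ)) := by
  constructor
  · intro t; simp [L]
  · intro w hw
    have hw' : (0 : ℤ) ≤ w := by simpa [L] using hw
    exact ⟨w.toNat, Int.toNat_of_nonneg hw'⟩

lemma state_enum (h : HG μ A) : ∀ k,
    IsEnumerationOf (L (state h k).2.1) (state h k).2.2
  | 0 => state_zero_enum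
  | (k + 1) => nextF_enum _ _ _

lemma state_tbound (h : HG μ A) : ∀ k,
    tch h (state h k).2.1 (state h k).2.2 ≤ (state h k).1
  | 0 => le_refl _
  | (k + 1) => le_max_right _ _

lemma state_tsucc (h : HG μ A) (k : ℕ) :
    (state h k).1 + 1 ≤ (state h (k + 1)).1 := le_max_left _ _

lemma state_t_mono (h : HG μ A) {k m : ℕ} (hkm : k ≤ m) :
    (state h k).1 ≤ (state h m).1 := by
  induction m, hkm using Nat.le_induction with
  | base => exact le_refl _
  | succ m hm ih => exact le_trans ih (le_trans (Nat.le_succ _) (state_tsucc h m))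

lemma state_t_ge (h : HG μ A) : ∀ k, k ≤ (state h k).1
  | 0 => Nat.zero_le _
  | (k + 1) => le_trans (Nat.succ_le_succ (state_t_ge h k)) (state_tsucc h k)

lemma state_agree_succ (h : HG μ A) (k : ℕ) {n : ℕ} (hn : n < (state h k).1) :
    (state h (k + 1)).2.2 n = (state h k).2.2 n := by
  show nextF (state h k).1 (state h k).2.2 (zf k) n = _
  rw [nextF, if_pos hn]

lemma state_at_t (h : HG μ A) (k : ℕ) :
    (state h (k + 1)).2.2 (state h k).1 = zf k := by
  show nextF (state h k).1 (state h k).2.2 (zf k) (state h k).1 = zf k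
  rw [nextF, if_neg (lt_irrefl _), if_pos rfl]

lemma state_agree (h : HG μ A) {k m : ℕ} (hkm : k ≤ m) {n : ℕ}
    (hn : n < (state h k).1) : (state h m).2.2 n = (state h k).2.2 n := by
  induction m, hkm using Nat.le_induction with
  | base => rfl
  | succ m hm ih =>
      rw [state_agree_succ h m (lt_of_lt_of_le hn (state_t_mono h hm)), ih]

/-- The diagonal limit enumeration of `ℤ`. -/
noncomputable def X (h : HG μ A) : ℕ → ℤ := fun n => (state h (n + 1)).2.2 n

lemma X_agree (h : HG μ A) {k n : ℕ} (hn : n < (state h k).1) :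
    X h n = (state h k).2.2 n := by
  rcases le_total (n + 1) k with hc | hc
  · exact (state_agree h hc (lt_of_lt_of_le (Nat.lt_succ_self n)
      (state_t_ge h (n + 1)))).symm
  · exact state_agree h hc hn

lemma X_enum (h : HG μ A) : IsEnumerationOf (Set.univ : Set ℤ) (X h) := by
  refine ⟨fun _ => Set.mem_univ _, fun w _ => ?_⟩
  obtain ⟨k, hk⟩ := zf_surj w
  refine ⟨(state h k).1, ?_⟩
  rw [X_agree h (lt_of_lt_of_le (Nat.lt_succ_self _) (state_tsucc h k)),
    state_at_t h k, hk]

lemma inputList_X_eq (h : HG μ A) (k : ℕ) :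
    inputList (X h) (state h k).1 = inputList (state h k).2.2 (state h k).1 := by
  unfold inputList
  congr 1
  funext j
  exact X_agree h j.2

end RegenAux

theorem randomized_exhaustive_generation_lower_bound :
    ¬ ∃ (Ω : Type) (_ : MeasurableSpace Ω) (μ : Measure Ω)
        (_ : IsProbabilityMeasure μ) (A : Ω → List ℤ → ℕ → ℤ),
      (∀ K ∈ Ccoll, ∀ x : ℕ → ℤ, ∀ t : ℕ,
        MeasurableSet {ω | (ZgeSet (A ω) x t \ K).Finite} ∧
        MeasurableSet {ω | K ⊆ seen x t ∪ ZltSet (A ω) x t ∪ ZgeSet (A ω) x t}) ∧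
      (∀ K ∈ Ccoll, ∀ x : ℕ → ℤ, IsEnumerationOf K x →
        ∃ tstar : ℕ, ∀ t : ℕ, tstar ≤ t →
          (1 : ENNReal) / 2 < μ {ω | (ZgeSet (A ω) x t \ K).Finite} ∧
          (1 : ENNReal) / 2 <
            μ {ω | K ⊆ seen x t ∪ ZltSet (A ω) x t ∪ ZgeSet (A ω) x t}) := by
  rintro ⟨Ω, inst, μ, hprob, A, hMeas, hG⟩
  have h : RegenAux.HG μ A := hG
  -- the limit enumeration of ℤ
  obtain ⟨T, hT⟩ := h Set.univ RegenAux.univ_mem_Ccoll (RegenAux.X h)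
    (RegenAux.X_enum h)
  -- work at stage k := T + 1
  set k : ℕ := T + 1 with hk
  set t : ℕ := (RegenAux.state h k).1 with ht
  set i : ℤ := (RegenAux.state h k).2.1 with hi
  set f : ℕ → ℤ := (RegenAux.state h k).2.2 with hf
  have htT : T ≤ t := le_trans (Nat.le_succ T) (RegenAux.state_t_ge h k)
  -- validity event for L i at time t
  have hE1 : (1 : ENNReal) / 2 <
      μ {ω | (ZgeSet (A ω) f t \ RegenAux.L i).Finite} :=
    RegenAux.tch_spec h (RegenAux.state_enum h k) (RegenAux.state_tbound h k)
  have hinp : inputList (RegenAux.X h) t = inputList f t := RegenAux.inputList_X_eq h k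
  have hZge : ∀ ω, ZgeSet (A ω) f t = ZgeSet (A ω) (RegenAux.X h) t := by
    intro ω; unfold ZgeSet; rw [hinp]
  have hE1' : (1 : ENNReal) / 2 <
      μ {ω | (ZgeSet (A ω) (RegenAux.X h) t \ RegenAux.L i).Finite} := by
    have : {ω | (ZgeSet (A ω) f t \ RegenAux.L i).Finite} =
        {ω | (ZgeSet (A ω) (RegenAux.X h) t \ RegenAux.L i).Finite} := by
      ext ω; simp only [Set.mem_setOf_eq]; rw [hZge ω]
    rwa [this] at hE1
  -- completeness event for univ at time t
  have hE2 : (1 : ENNReal) / 2 <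
      μ {ω | Set.univ ⊆ seen (RegenAux.X h) t ∪ ZltSet (A ω) (RegenAux.X h) t ∪
        ZgeSet (A ω) (RegenAux.X h) t} := (hT t htT).2
  -- the two events must intersect
  set E1 : Set Ω := {ω | (ZgeSet (A ω) (RegenAux.X h) t \ RegenAux.L i).Finite}
    with hE1def
  set E2 : Set Ω := {ω | Set.univ ⊆ seen (RegenAux.X h) t ∪
      ZltSet (A ω) (RegenAux.X h) t ∪ ZgeSet (A ω) (RegenAux.X h) t} with hE2def
  have hE2meas : MeasurableSet E2 :=
    (hMeas Set.univ RegenAux.univ_mem_Ccoll (RegenAux.X h) t).2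
  have hne : (E1 ∩ E2).Nonempty := by
    by_contra hcon
    have hdisj : Disjoint E1 E2 :=
      Set.disjoint_iff_inter_eq_empty.mpr (Set.not_nonempty_iff_eq_empty.mp hcon)
    have hsum : μ (E1 ∪ E2) = μ E1 + μ E2 := measure_union hdisj hE2meas
    have h1 : (1 : ENNReal) < μ E1 + μ E2 := by
      calc (1 : ENNReal) = 1 / 2 + 1 / 2 := by
            rw [ENNReal.add_halves]
        _ < μ E1 + μ E2 := by exact ENNReal.add_lt_add hE1' hE2
    have h2 : μ (E1 ∪ E2) ≤ 1 := prob_le_one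
    rw [hsum] at h2
    exact absurd (lt_of_lt_of_le h1 h2) (lt_irrefl _)
  obtain ⟨ω, hω1, hω2⟩ := hne
  -- derive the combinatorial contradiction
  have hfin : (ZgeSet (A ω) (RegenAux.X h) t \ RegenAux.L i).Finite := hω1
  have hcov : Set.univ ⊆ seen (RegenAux.X h) t ∪ ZltSet (A ω) (RegenAux.X h) t ∪
      ZgeSet (A ω) (RegenAux.X h) t := hω2
  have hseenfin : (seen (RegenAux.X h) t).Finite := by
    have : ({j : ℕ | j < t} : Set ℕ).Finite := Set.finite_Iio t
    exact this.image _
  have hzltfin : (ZltSet (A ω) (RegenAux.X h) t).Finite := by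
    have hsub : ({s : ℕ | 1 ≤ s ∧ s < t} : Set ℕ) ⊆ Set.Iio t := fun s hs => hs.2
    exact ((Set.finite_Iio t).subset hsub).image _
  have hBinf : (Set.Iio (-i) : Set ℤ).Infinite := Set.Iio_infinite _
  have hBsub : (Set.Iio (-i) : Set ℤ) ⊆
      (seen (RegenAux.X h) t ∪ ZltSet (A ω) (RegenAux.X h) t) ∪
        (ZgeSet (A ω) (RegenAux.X h) t \ RegenAux.L i) := by
    intro n hn
    have hnL : n ∉ RegenAux.L i := by
      simp only [RegenAux.L, Set.mem_setOf_eq]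
      exact not_le.mpr hn
    rcases hcov (Set.mem_univ n) with (hns | hnz)
    · exact Or.inl hns
    · exact Or.inr ⟨hnz, hnL⟩
  have hBfin : (Set.Iio (-i) : Set ℤ).Finite :=
    ((hseenfin.union hzltfin).union hfin).subset hBsub
  exact hBinf hBfin
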